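/- Suppose τ ∈ (0,1) and g is a horizontally valid two-dimensional move with g + gᵀ = t_τ. Then ĝ(α,β) ≤ 2 for all α, β ∈ [2,∞]. -/

import Mathlib

open scoped BigOperators Classical

noncomputable section

/-- The profile `P_x` of a point `x ∈ ℝ≥0`, viewed as a function on `[1,∞]`
(the extended reals `EReal` model the interval with its point `∞ = ⊤`):
`P_x(α) = 1` for `α ∈ [1,2)`, `P_x(α) = (xα - x)/(x + α - 2)` for `α ∈ [2,∞)`,
and `P_x(∞) = x` (with the conventions `P_0(α) = 0` for `α ∈ [2,∞]`, which the
formula also yields since division by zero is zero). -/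
def Pfun (x : ℝ) (α : EReal) : ℝ :=
  if α = ⊤ then x
  else if α.toReal < 2 then 1
  else (x * α.toReal - x) / (x + α.toReal - 2)

/-- A one-dimensional move: a finitely supported function on `ℝ≥0`
(modeled as a function on `ℝ` vanishing on the negatives). -/
def IsMove1 (f : ℝ → ℝ) : Prop :=
  (Function.support f).Finite ∧ ∀ x : ℝ, x < 0 → f x = 0

/-- Validity of a one-dimensional move. -/
def IsValid1 (f : ℝ → ℝ) : Prop :=
  (∑ᶠ x, f x) = 0 ∧
  (∀ lam : ℝ, 0 < lam → 0 ≤ ∑ᶠ x, (x / (x + lam)) * f x) ∧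
  0 ≤ ∑ᶠ x, x * f x

/-- The profile of a one-dimensional move. -/
def prof1 (f : ℝ → ℝ) (α : EReal) : ℝ := ∑ᶠ x, f x * Pfun x α

/-- A two-dimensional move: a finitely supported function on `ℝ≥0 × ℝ≥0`. -/
def IsMove2 (q : ℝ × ℝ → ℝ) : Prop :=
  (Function.support q).Finite ∧ ∀ p : ℝ × ℝ, p.1 < 0 ∨ p.2 < 0 → q p = 0

/-- A two-dimensional move is horizontally valid if all of its rows are valid. -/
def HorizValid (q : ℝ × ℝ → ℝ) : Prop := ∀ y : ℝ, IsValid1 fun x => q (x, y)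

/-- A two-dimensional move is vertically valid if all of its columns are valid. -/
def VertValid (q : ℝ × ℝ → ℝ) : Prop := ∀ x : ℝ, IsValid1 fun y => q (x, y)

/-- The two-variable profile of a two-dimensional move. -/
def prof2 (q : ℝ × ℝ → ℝ) (α β : EReal) : ℝ :=
  ∑ᶠ p : ℝ × ℝ, q p * Pfun p.1 α * Pfun p.2 β

/-- The transpose move `qᵀ(x,y) = q(y,x)`. -/
def transpose (q : ℝ × ℝ → ℝ) : ℝ × ℝ → ℝ := fun p => q (p.2, p.1)

/-- `pt x y` is the indicator move `⟦x,y⟧`. -/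
def pt (x y : ℝ) : ℝ × ℝ → ℝ := fun p => if p = (x, y) then 1 else 0

/-- The move `t_τ = 2·⟦1,1⟧ - ⟦2-τ,0⟧ - ⟦0,2-τ⟧`. -/
def tMove (τ : ℝ) : ℝ × ℝ → ℝ :=
  fun p => 2 * pt 1 1 p - pt (2 - τ) 0 p - pt 0 (2 - τ) p

/-- `slice g b` is the move `g_b`: the part of `g` on the horizontal line `y = b`. -/
def hslice (g : ℝ × ℝ → ℝ) (b : ℝ) : ℝ × ℝ → ℝ := fun p => if p.2 = b then g p else 0

lemma two_le_toReal {α : EReal} (hα : ((2:ℝ):EReal) ≤ α) (hne : α ≠ ⊤) :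
    (2:ℝ) ≤ α.toReal := by
  have := EReal.toReal_le_toReal hα (by simp) hne
  simpa using this

lemma Pfun_eq_of_ne_top {x : ℝ} {α : EReal} (hα : ((2:ℝ):EReal) ≤ α) (hne : α ≠ ⊤) :
    Pfun x α = (x * α.toReal - x) / (x + α.toReal - 2) := by
  have h2 := two_le_toReal hα hne
  rw [Pfun, if_neg hne, if_neg (not_lt.2 h2)]

lemma Pfun_zero_eval {α : EReal} (hα : ((2:ℝ):EReal) ≤ α) : Pfun 0 α = 0 := by
  by_cases h : α = ⊤
  · simp [Pfun, h]
  · rw [Pfun_eq_of_ne_top hα h]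
    simp

lemma Pfun_one_eval {α : EReal} (hα : ((2:ℝ):EReal) ≤ α) : Pfun 1 α = 1 := by
  by_cases h : α = ⊤
  · simp [Pfun, h]
  · rw [Pfun_eq_of_ne_top hα h]
    have h2 := two_le_toReal hα h
    rw [show (1:ℝ) * α.toReal - 1 = α.toReal - 1 by ring,
      show (1:ℝ) + α.toReal - 2 = α.toReal - 1 by ring]
    exact div_self (by linarith)

lemma Pfun_nonneg {x : ℝ} (hx : 0 ≤ x) {α : EReal} (hα : ((2:ℝ):EReal) ≤ α) :
    0 ≤ Pfun x α := by
  by_cases h : α = ⊤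
  · simpa [Pfun, h] using hx
  · rw [Pfun_eq_of_ne_top hα h]
    have h2 := two_le_toReal hα h
    apply div_nonneg <;> nlinarith

lemma prof1_nonneg {f : ℝ → ℝ} (hm : IsMove1 f) (hv : IsValid1 f) {α : EReal}
    (hα : ((2:ℝ):EReal) ≤ α) : 0 ≤ prof1 f α := by
  by_cases htop : α = ⊤
  · have : prof1 f α = ∑ᶠ x, x * f x := by
      rw [prof1]
      exact finsum_congr fun x => by rw [Pfun, if_pos htop, mul_comm]
    rw [this]; exact hv.2.2
  · have h2 := two_le_toReal hα htop
    set a := α.toReal with ha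
    rcases eq_or_lt_of_le h2 with heq | hlt
    · -- a = 2 : limit argument
      classical
      set s := hm.1.toFinset with hs
      have hsub : ∀ F : ℝ → ℝ, Function.support (fun x => F x * f x) ⊆ (s : Set ℝ) := by
        intro F x hx
        simp only [Function.mem_support] at hx
        have : f x ≠ 0 := fun h0 => hx (by rw [h0, mul_zero])
        simpa [hs] using this
      have hsub2 : Function.support (fun x => f x * Pfun x α) ⊆ (s : Set ℝ) := by
        intro x hx
        simp only [Function.mem_support] at hx
        have : f x ≠ 0 := fun h0 => hx (by rw [h0, zero_mul])
        simpa [hs] using this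
      have hrepr : prof1 f α = ∑ x ∈ s, f x * Pfun x α :=
        finsum_eq_finset_sum_of_support_subset _ hsub2
      have hF : ∀ lam : ℝ, 0 < lam → 0 ≤ ∑ x ∈ s, (x / (x + lam)) * f x := by
        intro lam hlam
        have h0 := hv.2.1 lam hlam
        rwa [finsum_eq_finset_sum_of_support_subset _ (hsub (fun x => x / (x + lam)))] at h0
      have htend : Filter.Tendsto (fun lam : ℝ => ∑ x ∈ s, (x / (x + lam)) * f x)
          (nhdsWithin 0 (Set.Ioi 0)) (nhds (∑ x ∈ s, f x * Pfun x α)) := by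
        apply tendsto_finset_sum
        intro x _
        by_cases hx0 : x = 0
        · subst hx0
          have h0 : Filter.Tendsto (fun _ : ℝ => (0:ℝ)) (nhdsWithin 0 (Set.Ioi 0))
              (nhds 0) := tendsto_const_nhds
          simpa [Pfun_zero_eval hα] using h0
        · have hc : ContinuousAt (fun lam : ℝ => (x / (x + lam)) * f x) 0 := by
            apply ContinuousAt.mul _ continuousAt_const
            exact ContinuousAt.div continuousAt_const
              (continuousAt_const.add continuousAt_id) (by simpa using hx0)
          have h : Filter.Tendsto (fun lam : ℝ => (x / (x + lam)) * f x)
              (nhdsWithin 0 (Set.Ioi 0)) (nhds (x / (x + 0) * f x)) :=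
            hc.tendsto.mono_left nhdsWithin_le_nhds
          have hPx : Pfun x α = 1 := by
            rw [Pfun_eq_of_ne_top hα htop, ← ha, ← heq,
              show x * 2 - x = x by ring, show x + 2 - 2 = x by ring]
            exact div_self hx0
          have hval : x / (x + 0) * f x = f x * Pfun x α := by
            rw [hPx, add_zero, div_self hx0]; ring
          rwa [hval] at h
      rw [hrepr]
      exact ge_of_tendsto htend
        (eventually_nhdsWithin_of_forall fun lam hlam => hF lam hlam)
    · -- 2 < a
      have hlam : (0:ℝ) < a - 2 := by linarith
      have hkey : ∀ x, f x * Pfun x α = (a - 1) * ((x / (x + (a - 2))) * f x) := by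
        intro x
        rw [Pfun_eq_of_ne_top hα htop, ← ha,
          show x * a - x = (a - 1) * x by ring, show x + a - 2 = x + (a - 2) by ring,
          mul_div_assoc]
        ring
      have hfin : (Function.support fun x => (x / (x + (a - 2))) * f x).Finite := by
        apply hm.1.subset
        intro x hx
        simp only [Function.mem_support] at hx ⊢
        exact fun h0 => hx (by rw [h0, mul_zero])
      rw [prof1, finsum_congr hkey, ← mul_finsum _ _]
      exact mul_nonneg (by linarith) (hv.2.1 _ hlam)

lemma support_term_subset (q : ℝ × ℝ → ℝ) (α β : EReal) :
    (Function.support fun p => q p * Pfun p.1 α * Pfun p.2 β) ⊆ Function.support q := by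
  intro p hp
  simp only [Function.mem_support] at hp ⊢
  exact fun h0 => hp (by rw [h0, zero_mul, zero_mul])

lemma prof2_nonneg {g : ℝ × ℝ → ℝ} (hm : IsMove2 g) (hv : HorizValid g) {α β : EReal}
    (hα : ((2:ℝ):EReal) ≤ α) (hβ : ((2:ℝ):EReal) ≤ β) : 0 ≤ prof2 g α β := by
  classical
  set s := hm.1.toFinset with hs
  set Sx := s.image Prod.fst with hSx
  set T := s.image Prod.snd with hT
  have hmem : ∀ p : ℝ × ℝ, g p ≠ 0 → p ∈ s := fun p hp => hm.1.mem_toFinset.2 hp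
  have hrepr : prof2 g α β = ∑ p ∈ Sx ×ˢ T, g p * Pfun p.1 α * Pfun p.2 β := by
    apply finsum_eq_finset_sum_of_support_subset
    intro p hp
    have hg : g p ≠ 0 := by
      have := support_term_subset g α β hp
      simpa using this
    have hps := hmem p hg
    simp only [Finset.coe_product, Set.mem_prod, Finset.mem_coe]
    exact ⟨Finset.mem_image_of_mem _ hps, Finset.mem_image_of_mem _ hps⟩
  rw [hrepr, Finset.sum_product_right]
  apply Finset.sum_nonneg
  intro y hy
  have hy0 : 0 ≤ y := by
    by_contra hneg
    push_neg at hneg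
    obtain ⟨p, hps, hpy⟩ := Finset.mem_image.1 hy
    have hgp : g p ≠ 0 := by simpa [hs] using hps
    exact hgp (hm.2 p (Or.inr (by rw [hpy]; exact hneg)))
  have hrow_fin : (Function.support fun x => g (x, y)).Finite := by
    apply Set.Finite.subset (Sx.finite_toSet)
    intro x hx
    simp only [Function.mem_support] at hx
    have := hmem (x, y) hx
    exact Finset.mem_coe.2 (Finset.mem_image_of_mem _ this)
  have hrow_move : IsMove1 fun x => g (x, y) :=
    ⟨hrow_fin, fun x hx => hm.2 _ (Or.inl hx)⟩
  have hinner : ∑ x ∈ Sx, g (x, y) * Pfun x α * Pfun y β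
      = prof1 (fun x => g (x, y)) α * Pfun y β := by
    rw [prof1, finsum_eq_finset_sum_of_support_subset _ ?_, Finset.sum_mul]
    intro x hx
    simp only [Function.mem_support] at hx
    have hg : g (x, y) ≠ 0 := fun h0 => hx (by rw [h0, zero_mul])
    exact Finset.mem_coe.2 (Finset.mem_image_of_mem _ (hmem (x, y) hg))
  rw [hinner]
  exact mul_nonneg (prof1_nonneg hrow_move (hv y) hα) (Pfun_nonneg hy0 hβ)

lemma prof2_transpose (g : ℝ × ℝ → ℝ) (α β : EReal) :
    prof2 (transpose g) α β = prof2 g β α := by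
  rw [prof2, prof2]
  exact finsum_eq_of_bijective Prod.swap Prod.swap_bijective
    (fun p => by simp only [transpose, Prod.swap]; ring)

lemma prof2_add {q r : ℝ × ℝ → ℝ} (hq : (Function.support q).Finite)
    (hr : (Function.support r).Finite) (α β : EReal) :
    prof2 (fun p => q p + r p) α β = prof2 q α β + prof2 r α β := by
  rw [prof2, prof2, prof2,
    ← finsum_add_distrib (hq.subset (support_term_subset q α β))
      (hr.subset (support_term_subset r α β))]
  exact finsum_congr fun p => by ring

lemma prof2_pt (x y : ℝ) (α β : EReal) : prof2 (pt x y) α β = Pfun x α * Pfun y β := by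
  rw [prof2, finsum_eq_single _ (x, y)]
  · simp [pt]
  · intro p hp
    simp [pt, hp]

lemma support_pt_smul (c x y : ℝ) :
    (Function.support fun p => c * pt x y p).Finite := by
  apply Set.Finite.subset (Set.finite_singleton (x, y))
  intro p hp
  simp only [Function.mem_support, pt] at hp
  by_contra hne
  simp only [Set.mem_singleton_iff] at hne
  exact hp (by rw [if_neg hne, mul_zero])

lemma prof2_smul (c : ℝ) (q : ℝ × ℝ → ℝ) (hq : (Function.support q).Finite)
    (α β : EReal) : prof2 (fun p => c * q p) α β = c * prof2 q α β := by
  rw [prof2, prof2, mul_finsum _ _]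
  exact finsum_congr fun p => by ring

lemma prof2_tMove {τ : ℝ} (hτ : τ ∈ Set.Ioo (0:ℝ) 1) {α β : EReal}
    (hα : ((2:ℝ):EReal) ≤ α) (hβ : ((2:ℝ):EReal) ≤ β) :
    prof2 (tMove τ) α β = 2 := by
  have hfun : tMove τ = fun p => 2 * pt 1 1 p +
      ((-1) * pt (2 - τ) 0 p + (-1) * pt 0 (2 - τ) p) := by
    funext p; simp [tMove]; ring
  rw [hfun, prof2_add (support_pt_smul 2 1 1)
      (((support_pt_smul (-1) (2 - τ) 0).union (support_pt_smul (-1) 0 (2 - τ))).subset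
        (Function.support_add _ _)),
    prof2_add (support_pt_smul (-1) (2 - τ) 0) (support_pt_smul (-1) 0 (2 - τ)),
    prof2_smul 2 _ (by simpa using support_pt_smul 1 1 1),
    prof2_smul (-1) _ (by simpa using support_pt_smul 1 (2 - τ) 0),
    prof2_smul (-1) _ (by simpa using support_pt_smul 1 0 (2 - τ)),
    prof2_pt, prof2_pt, prof2_pt,
    Pfun_zero_eval hα, Pfun_zero_eval hβ, Pfun_one_eval hα, Pfun_one_eval hβ]
  ring

/-- If `g` is horizontally valid and `g + gᵀ = t_τ`, then `ĝ(α,β) ≤ 2` for all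
`α, β ∈ [2,∞]`. -/
theorem stmt_7 (τ : ℝ) (hτ : τ ∈ Set.Ioo (0 : ℝ) 1)
    (g : ℝ × ℝ → ℝ) (hmove : IsMove2 g) (hval : HorizValid g)
    (hsum : ∀ p, g p + transpose g p = tMove τ p) :
    ∀ α β : EReal, ((2 : ℝ) : EReal) ≤ α → ((2 : ℝ) : EReal) ≤ β →
      prof2 g α β ≤ 2 := by
  intro α β hα hβ
  have hgT_fin : (Function.support (transpose g)).Finite := by
    have : Function.support (transpose g) ⊆ Prod.swap ⁻¹' Function.support g := by
      intro p hp
      exact hp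
    exact (hmove.1.preimage Prod.swap_injective.injOn).subset this
  have h1 : prof2 (fun p => g p + transpose g p) α β = prof2 (tMove τ) α β := by
    rw [funext hsum]
  rw [prof2_add hmove.1 hgT_fin, prof2_transpose, prof2_tMove hτ hα hβ] at h1
  have hnn : 0 ≤ prof2 g β α := prof2_nonneg hmove hval hβ hα
  linarith
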